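/- (KL divergence between two Bernoulli mixtures decomposes into a discrete and a conditional part.) Let E be a measurable space, let μ₁ and μ₂ be probability measures on E with μ₁ absolutely continuous with respect to μ₂ and with finite Kullback–Leibler divergence KL(μ₁‖μ₂), and let r, r' ∈ (0,1). On the disjoint union Option E = {none} ⊔ E, define the probability measures ν₁ := (1−r)·δ_none + r·(some)_*μ₁ and ν₂ := (1−r')·δ_none + r'·(some)_*μ₂, where (some)_*μ denotes the pushforward of μ along the inclusion of E. Then KL(ν₁‖ν₂) = (1−r)·log((1−r)/(1−r')) + r·log(r/r') + r·KL(μ₁‖μ₂). -/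

import Mathlib

open MeasureTheory
open scoped ENNReal

/-- The σ-algebra on the disjoint union `Option E = {none} ⊔ E`, transported from the sum
`E ⊕ PUnit` along the canonical bijection. -/
instance optionMeasurableSpace {E : Type*} [MeasurableSpace E] :
    MeasurableSpace (Option E) :=
  MeasurableSpace.comap (Equiv.optionEquivSumPUnit.{0, u_1} E) inferInstance

/-- The Kullback–Leibler divergence `KL(μ‖ν) = ∫ log(dμ/dν) dμ` (a real number), meaningful
when `μ ≪ ν` and the log Radon–Nikodym derivative is `μ`-integrable. -/
noncomputable def klDivergence {E : Type*} [MeasurableSpace E] (μ ν : Measure E) : ℝ :=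
  ∫ x, Real.log ((μ.rnDeriv ν x).toReal) ∂μ

section aux

variable {E : Type*} [MeasurableSpace E]

/-- The canonical measurable equivalence `Option E ≃ᵐ E ⊕ PUnit`. -/
def optionMEquiv : Option E ≃ᵐ (E ⊕ PUnit) where
  toEquiv := Equiv.optionEquivSumPUnit E
  measurable_toFun := measurable_iff_comap_le.mpr le_rfl
  measurable_invFun := by
    intro s hs
    obtain ⟨t, ht, rfl⟩ := hs
    simpa [Set.preimage_preimage] using ht

lemma measurable_some' : Measurable (Option.some : E → Option E) :=
  (optionMEquiv (E := E)).symm.measurable.comp measurable_inl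

lemma measurableEmbedding_inl' {β : Type*} [MeasurableSpace β] :
    MeasurableEmbedding (Sum.inl : E → E ⊕ β) :=
  ⟨Sum.inl_injective, measurable_inl, fun _ hs => hs.inl_image⟩

lemma measurableEmbedding_some : MeasurableEmbedding (Option.some : E → Option E) :=
  (optionMEquiv (E := E)).symm.measurableEmbedding.comp measurableEmbedding_inl'

lemma measurableSet_none : MeasurableSet ({none} : Set (Option E)) := by
  have h : ({none} : Set (Option E))
      = (Equiv.optionEquivSumPUnit E) ⁻¹' {Sum.inr PUnit.unit} := by
    ext o; cases o <;> simp [Equiv.optionEquivSumPUnit]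
  have h2 : MeasurableSet ({Sum.inr PUnit.unit} : Set (E ⊕ PUnit)) := by
    have : ({Sum.inr PUnit.unit} : Set (E ⊕ PUnit)) = Set.range Sum.inr := by
      ext x; cases x <;> simp
    rw [this]; exact measurableSet_range_inr
  rw [h]
  exact (optionMEquiv (E := E)).measurable h2

end aux

/-- **KL divergence between two Bernoulli mixtures decomposes.**
Let `E` be a measurable space, `μ₁, μ₂` probability measures on `E` with `μ₁ ≪ μ₂` and
finite KL divergence, and `r, r' ∈ (0,1)`. On `Option E = {none} ⊔ E`, define
`ν₁ := (1−r)·δ_none + r·(some)_*μ₁` and `ν₂ := (1−r')·δ_none + r'·(some)_*μ₂`. Then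
`KL(ν₁‖ν₂) = (1−r)·log((1−r)/(1−r')) + r·log(r/r') + r·KL(μ₁‖μ₂)`. -/
theorem klDiv_bernoulli_mixture {E : Type*} [MeasurableSpace E]
    (μ₁ μ₂ : Measure E) [IsProbabilityMeasure μ₁] [IsProbabilityMeasure μ₂]
    (hac : μ₁ ≪ μ₂)
    (hfin : Integrable (fun x => Real.log ((μ₁.rnDeriv μ₂ x).toReal)) μ₁)
    (r r' : ℝ) (hr : r ∈ Set.Ioo (0 : ℝ) 1) (hr' : r' ∈ Set.Ioo (0 : ℝ) 1) :
    klDivergence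
        (ENNReal.ofReal (1 - r) • Measure.dirac (none : Option E)
          + ENNReal.ofReal r • Measure.map Option.some μ₁)
        (ENNReal.ofReal (1 - r') • Measure.dirac (none : Option E)
          + ENNReal.ofReal r' • Measure.map Option.some μ₂)
      = (1 - r) * Real.log ((1 - r) / (1 - r')) + r * Real.log (r / r')
          + r * klDivergence μ₁ μ₂ := by
  classical
  obtain ⟨hr0, hr1⟩ := hr
  obtain ⟨hr'0, hr'1⟩ := hr'
  have h1r : (0:ℝ) < 1 - r := by linarith
  have h1r' : (0:ℝ) < 1 - r' := by linarith
  have hdivpos : (0:ℝ) < (1 - r) / (1 - r') := div_pos h1r h1r'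
  have hdivpos' : (0:ℝ) < r / r' := div_pos hr0 hr'0
  set g : E → ℝ≥0∞ := μ₁.rnDeriv μ₂ with hg
  have hgm : Measurable g := Measure.measurable_rnDeriv _ _
  set f : Option E → ℝ≥0∞ := fun o =>
    Sum.elim (fun x => ENNReal.ofReal (r / r') * g x)
      (fun _ => ENNReal.ofReal ((1 - r) / (1 - r'))) (Equiv.optionEquivSumPUnit E o) with hfdef
  have hf : Measurable f :=
    ((hgm.const_mul _).sumElim measurable_const).comp
      (optionMEquiv (E := E)).measurable
  have hfnone : f none = ENNReal.ofReal ((1 - r) / (1 - r')) := rfl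
  have hfsome : ∀ x, f (some x) = ENNReal.ofReal (r / r') * g x := fun _ => rfl
  set ν₁ : Measure (Option E) :=
    ENNReal.ofReal (1 - r) • Measure.dirac (none : Option E)
      + ENNReal.ofReal r • Measure.map Option.some μ₁ with hν₁
  set ν₂ : Measure (Option E) :=
    ENNReal.ofReal (1 - r') • Measure.dirac (none : Option E)
      + ENNReal.ofReal r' • Measure.map Option.some μ₂ with hν₂
  have hmap2_univ : Measure.map Option.some μ₂ Set.univ = 1 := by
    rw [Measure.map_apply measurable_some' MeasurableSet.univ]; simp
  haveI : IsFiniteMeasure ν₂ := by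
    constructor
    rw [hν₂]
    simp only [Measure.add_apply, Measure.smul_apply, smul_eq_mul, hmap2_univ]
    simp [ENNReal.add_lt_top, ENNReal.mul_lt_top, ENNReal.ofReal_lt_top]
  -- the density identity
  have hwd : ν₂.withDensity f = ν₁ := by
    ext s hs
    rw [withDensity_apply _ hs, hν₂, Measure.restrict_add, Measure.restrict_smul,
      Measure.restrict_smul, lintegral_add_measure, lintegral_smul_measure,
      lintegral_smul_measure, setLIntegral_dirac' hf hs,
      Measure.restrict_map measurable_some' hs,
      lintegral_map hf measurable_some']
    have hlin : ∫⁻ x in Option.some ⁻¹' s, f (some x) ∂μ₂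
        = ENNReal.ofReal (r / r') * μ₁ (Option.some ⁻¹' s) := by
      simp_rw [hfsome]
      rw [lintegral_const_mul _ hgm, Measure.setLIntegral_rnDeriv hac]
    rw [hlin, hν₁]
    simp only [Measure.add_apply, Measure.smul_apply, smul_eq_mul,
      Measure.map_apply measurable_some' hs, Measure.dirac_apply' _ hs]
    have hc1 : ENNReal.ofReal (1 - r') * ENNReal.ofReal ((1 - r) / (1 - r'))
        = ENNReal.ofReal (1 - r) := by
      rw [← ENNReal.ofReal_mul h1r'.le, mul_div_cancel₀ _ h1r'.ne']
    have hc2 : ENNReal.ofReal r' * ENNReal.ofReal (r / r') = ENNReal.ofReal r := by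
      rw [← ENNReal.ofReal_mul hr'0.le, mul_div_cancel₀ _ hr'0.ne']
    rw [hfnone, ← mul_assoc, hc2]
    by_cases hmem : (none : Option E) ∈ s <;>
      simp [hmem, Set.indicator, hc1, mul_comm]
  have hac₁₂ : ν₁ ≪ ν₂ := hwd ▸ withDensity_absolutelyContinuous ν₂ f
  have hrn : ν₁.rnDeriv ν₂ =ᵐ[ν₂] f := by
    have := Measure.rnDeriv_withDensity ν₂ hf
    rwa [hwd] at this
  have hrn1 : ν₁.rnDeriv ν₂ =ᵐ[ν₁] f := hac₁₂.ae_le hrn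
  have hkl : klDivergence ν₁ ν₂ = ∫ o, Real.log ((f o).toReal) ∂ν₁ := by
    refine integral_congr_ae ?_
    filter_upwards [hrn1] with o ho
    rw [ho]
  -- strong measurability of the integrand
  have hsm : StronglyMeasurable fun o => Real.log ((f o).toReal) :=
    (Real.measurable_log.comp hf.ennreal_toReal).stronglyMeasurable
  -- a.e. facts about g
  have hgpos : ∀ᵐ x ∂μ₁, 0 < g x := Measure.rnDeriv_pos hac
  have hglt : ∀ᵐ x ∂μ₁, g x < ∞ := hac.ae_le (Measure.rnDeriv_lt_top μ₁ μ₂)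
  have hcongr : ∀ᵐ x ∂μ₁, Real.log ((f (some x)).toReal)
      = Real.log (r / r') + Real.log ((g x).toReal) := by
    filter_upwards [hgpos, hglt] with x hx1 hx2
    rw [hfsome, ENNReal.toReal_mul, ENNReal.toReal_ofReal hdivpos'.le,
      Real.log_mul hdivpos'.ne' (ENNReal.toReal_ne_zero.mpr ⟨hx1.ne', hx2.ne⟩)]
  have hint_some : Integrable (fun x => Real.log ((f (some x)).toReal)) μ₁ :=
    ((integrable_const (Real.log (r / r'))).add hfin).congr
      (by filter_upwards [hcongr] with x hx using hx.symm)
  have hInt1 : Integrable (fun o => Real.log ((f o).toReal))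
      (ENNReal.ofReal (1 - r) • Measure.dirac (none : Option E)) := by
    rw [integrable_smul_measure (by simp; linarith) ENNReal.ofReal_ne_top]
    refine ⟨hsm.aestronglyMeasurable, ?_⟩
    have : HasFiniteIntegral (fun o => Real.log ((f o).toReal)) (Measure.dirac none) := by
      rw [HasFiniteIntegral,
        lintegral_dirac' _ (hf.ennreal_toReal.log.enorm)]
      exact enorm_lt_top
    exact this
  have hInt2 : Integrable (fun o => Real.log ((f o).toReal))
      (ENNReal.ofReal r • Measure.map Option.some μ₁) := by
    rw [integrable_smul_measure (by simp; linarith) ENNReal.ofReal_ne_top]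
    rw [measurableEmbedding_some.integrable_map_iff]
    exact hint_some
  rw [hkl, hν₁, integral_add_measure hInt1 hInt2, integral_smul_measure,
    integral_smul_measure, integral_dirac' _ _ hsm,
    integral_map measurable_some'.aemeasurable hsm.aestronglyMeasurable,
    integral_congr_ae hcongr, integral_add (integrable_const _) hfin,
    integral_const]
  simp only [hfnone, ENNReal.toReal_ofReal h1r.le, ENNReal.toReal_ofReal hr0.le,
    ENNReal.toReal_ofReal hdivpos.le, measure_univ, probReal_univ, ENNReal.toReal_one, smul_eq_mul, one_mul]
  rw [klDivergence]
  ring
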